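/- Let P₁ = Gamma(∑x_i + 1, 1/n) be the Poisson posterior under a uniform prior and P₂ = Gamma(∑x_i + 1, 1/(n+λ)) the posterior under an Exp(λ) prior, with ∑_{i=1}^n x_i ≥ 1 and λ > 0. Then d_W(P₁, P₂) = λ(x̄ + 1/n)/(n+λ), where x̄ = (1/n)∑x_i. -/

import Mathlib

open MeasureTheory Set

namespace WassersteinAux


noncomputable def pdfN (k r θ : ℝ) : ℝ :=
  Set.indicator (Ioi 0)
    (fun θ => (Real.Gamma k)⁻¹ * r ^ k * (θ ^ (k - 1) * Real.exp (-(r * θ)))) θ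

lemma pdfN_nonneg (k r : ℝ) (hk : 0 < k) (hr : 0 < r) (θ : ℝ) : 0 ≤ pdfN k r θ := by
  unfold pdfN
  apply Set.indicator_nonneg
  intro x hx
  have hx' : (0:ℝ) < x := hx
  have h1 : 0 < Real.Gamma k := Real.Gamma_pos_of_pos hk
  positivity

lemma pdfN_measurable (k r : ℝ) : Measurable (pdfN k r) := by
  unfold pdfN
  apply Measurable.indicator ?_ measurableSet_Ioi
  fun_prop

lemma integrableOn_core (k r : ℝ) (hk : 0 < k) (hr : 0 < r) :
    IntegrableOn (fun θ : ℝ => θ ^ (k - 1) * Real.exp (-(r * θ))) (Ioi 0) := by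
  have := integrableOn_rpow_mul_exp_neg_mul_rpow (p := 1) (s := k - 1) (b := r)
    (by linarith) zero_lt_one hr
  simpa [Real.rpow_one, neg_mul] using this

lemma integral_core (k r : ℝ) (hk : 0 < k) (hr : 0 < r) :
    ∫ θ in Ioi (0:ℝ), θ ^ (k - 1) * Real.exp (-(r * θ)) = Real.Gamma k / r ^ k := by
  rw [Real.integral_rpow_mul_exp_neg_mul_Ioi hk hr]
  rw [Real.div_rpow zero_le_one hr.le, Real.one_rpow]
  ring

lemma integrable_pdfN (k r : ℝ) (hk : 0 < k) (hr : 0 < r) :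
    Integrable (pdfN k r) := by
  unfold pdfN
  rw [integrable_indicator_iff measurableSet_Ioi]
  exact (integrableOn_core k r hk hr).const_mul _

lemma integral_pdfN (k r : ℝ) (hk : 0 < k) (hr : 0 < r) :
    ∫ θ, pdfN k r θ = 1 := by
  unfold pdfN
  rw [integral_indicator measurableSet_Ioi, integral_const_mul _ _,
    integral_core k r hk hr]
  have h1 : Real.Gamma k ≠ 0 := (Real.Gamma_pos_of_pos hk).ne'
  have h2 : r ^ k ≠ 0 := (Real.rpow_pos_of_pos hr k).ne'
  field_simp

lemma id_mul_pdfN (k r : ℝ) (hk : 0 < k) :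
    (fun θ => θ * pdfN k r θ) = Set.indicator (Ioi 0)
      (fun θ => (Real.Gamma k)⁻¹ * r ^ k * (θ ^ (k + 1 - 1) * Real.exp (-(r * θ)))) := by
  funext θ
  unfold pdfN
  by_cases hθ : (0:ℝ) < θ
  · simp only [Set.indicator_of_mem (mem_Ioi.mpr hθ)]
    have : θ ^ (k + 1 - 1) = θ * θ ^ (k - 1) := by
      rw [show k + 1 - 1 = 1 + (k - 1) by ring, Real.rpow_add hθ, Real.rpow_one]
    rw [this]; ring
  · simp only [Set.indicator_of_notMem (by simpa using hθ : θ ∉ Ioi (0:ℝ)), mul_zero]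

lemma integrable_id_mul_pdfN (k r : ℝ) (hk : 0 < k) (hr : 0 < r) :
    Integrable (fun θ => θ * pdfN k r θ) := by
  rw [id_mul_pdfN k r hk]
  rw [integrable_indicator_iff measurableSet_Ioi]
  exact (integrableOn_core (k + 1) r (by linarith) hr).const_mul _

lemma integral_id_mul_pdfN (k r : ℝ) (hk : 0 < k) (hr : 0 < r) :
    ∫ θ, θ * pdfN k r θ = k / r := by
  rw [id_mul_pdfN k r hk, integral_indicator measurableSet_Ioi, integral_const_mul _ _,
    integral_core (k + 1) r (by linarith) hr]
  rw [Real.Gamma_add_one hk.ne', Real.rpow_add hr, Real.rpow_one]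
  have h1 : Real.Gamma k ≠ 0 := (Real.Gamma_pos_of_pos hk).ne'
  have h2 : r ^ k ≠ 0 := (Real.rpow_pos_of_pos hr k).ne'
  field_simp

lemma integrable_mul_pdfN (k r : ℝ) (hk : 0 < k) (hr : 0 < r) (h : ℝ → ℝ)
    (hm : Measurable h) (A : ℝ) (hb : ∀ θ : ℝ, 0 < θ → |h θ| ≤ A + θ) :
    Integrable (fun θ => h θ * pdfN k r θ) := by
  have hint : Integrable (fun θ => A * pdfN k r θ + θ * pdfN k r θ) :=
    ((integrable_pdfN k r hk hr).const_mul A).add (integrable_id_mul_pdfN k r hk hr)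
  refine hint.mono' ((hm.mul (pdfN_measurable k r)).aestronglyMeasurable) ?_
  refine Filter.Eventually.of_forall (fun θ => ?_)
  by_cases hθ : (0:ℝ) < θ
  · have hp := pdfN_nonneg k r hk hr θ
    have := hb θ hθ
    calc ‖h θ * pdfN k r θ‖ = |h θ| * pdfN k r θ := by
          rw [Real.norm_eq_abs, abs_mul, abs_of_nonneg hp]
      _ ≤ (A + θ) * pdfN k r θ := by
          exact mul_le_mul_of_nonneg_right this hp
      _ = A * pdfN k r θ + θ * pdfN k r θ := by ring
  · have : pdfN k r θ = 0 := by
      unfold pdfN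
      exact Set.indicator_of_notMem (by simpa using hθ) _
    simp [this]





lemma gammaPdf_eq (k r : ℝ) (hr : 0 < r) (θ : ℝ) :
    (if 0 < θ then (Real.Gamma k)⁻¹ * ((1 / r) ^ k)⁻¹ * θ ^ (k - 1) * Real.exp (-θ / (1 / r))
      else 0) = pdfN k r θ := by
  unfold pdfN
  by_cases hθ : (0:ℝ) < θ
  · rw [if_pos hθ, Set.indicator_of_mem (mem_Ioi.mpr hθ)]
    rw [one_div, Real.inv_rpow hr.le, inv_inv]
    rw [show -θ / r⁻¹ = -(r * θ) by field_simp]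
    ring
  · rw [if_neg hθ, Set.indicator_of_notMem (by simpa using hθ)]

lemma integral_withDensity_pdfN (k r : ℝ) (hk : 0 < k) (hr : 0 < r) (h : ℝ → ℝ) :
    ∫ θ, h θ ∂(volume.withDensity fun θ => ENNReal.ofReal (pdfN k r θ)) =
      ∫ θ, h θ * pdfN k r θ := by
  have hmeas : Measurable fun θ => (pdfN k r θ).toNNReal :=
    (pdfN_measurable k r).real_toNNReal
  rw [show (fun θ => ENNReal.ofReal (pdfN k r θ))
      = fun θ => ((pdfN k r θ).toNNReal : ENNReal) from rfl]
  rw [integral_withDensity_eq_integral_smul hmeas]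
  congr 1
  funext θ
  rw [NNReal.smul_def, Real.coe_toNNReal _ (pdfN_nonneg k r hk hr θ), smul_eq_mul, mul_comm]

lemma pdfN_scale (k r c : ℝ) (hr : 0 < r) (hc : 0 < c) (θ : ℝ) :
    pdfN k (r / c) (c * θ) = c⁻¹ * pdfN k r θ := by
  unfold pdfN
  by_cases hθ : (0:ℝ) < θ
  · rw [Set.indicator_of_mem (mem_Ioi.mpr (mul_pos hc hθ)),
      Set.indicator_of_mem (mem_Ioi.mpr hθ)]
    rw [Real.mul_rpow hc.le hθ.le, Real.div_rpow hr.le hc.le,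
      show r / c * (c * θ) = r * θ by field_simp,
      Real.rpow_sub hc, Real.rpow_one]
    have h1 : c ^ k ≠ 0 := (Real.rpow_pos_of_pos hc k).ne'
    have key : r ^ k / c ^ k * (c ^ k / c) = c⁻¹ * r ^ k := by
      field_simp
    linear_combination (Real.Gamma k)⁻¹ * θ ^ (k - 1) * Real.exp (-(r * θ)) * key
  · have h1 : ¬ (0:ℝ) < c * θ := by
      push_neg at hθ ⊢
      exact mul_nonpos_of_nonneg_of_nonpos hc.le hθ
    rw [Set.indicator_of_notMem (by simpa using h1),
      Set.indicator_of_notMem (by simpa using hθ), mul_zero]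

lemma integral_scale (k r c : ℝ) (hr : 0 < r) (hc : 0 < c) (h : ℝ → ℝ) :
    ∫ θ, h θ * pdfN k (r / c) θ = ∫ θ, h (c * θ) * pdfN k r θ := by
  have h1 := Measure.integral_comp_mul_left
    (fun θ => h θ * pdfN k (r / c) θ) c
  have h2 : (fun x => h (c * x) * pdfN k (r / c) (c * x))
      = fun x => c⁻¹ * (h (c * x) * pdfN k r x) := by
    funext x
    rw [pdfN_scale k r c hr hc]
    ring
  rw [h2, MeasureTheory.integral_const_mul _ _, abs_of_pos (inv_pos.mpr hc),
    smul_eq_mul] at h1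
  exact (mul_left_cancel₀ (inv_ne_zero hc.ne') h1).symm

lemma pdfN_zero (k r θ : ℝ) (hθ : ¬ 0 < θ) : pdfN k r θ = 0 := by
  unfold pdfN
  exact Set.indicator_of_notMem (by simpa using hθ) _




lemma lip_abs_sub (h : ℝ → ℝ) (hh : LipschitzWith 1 h) (a b : ℝ) :
    |h a - h b| ≤ |a - b| := by
  have := hh.dist_le_mul a b
  simpa [Real.dist_eq] using this

lemma lip_bound (h : ℝ → ℝ) (hh : LipschitzWith 1 h) (θ : ℝ) (hθ : 0 < θ) :
    |h θ| ≤ |h 0| + θ := by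
  have h1 : |h θ - h 0| ≤ |θ - 0| := lip_abs_sub h hh θ 0
  have h2 : |h θ| - |h 0| ≤ |h θ - h 0| := abs_sub_abs_le_abs_sub _ _
  rw [sub_zero, abs_of_pos hθ] at h1
  linarith

lemma key_bound (k r c : ℝ) (hk : 0 < k) (hr : 0 < r) (hc0 : 0 < c) (hc1 : c ≤ 1)
    (h : ℝ → ℝ) (hh : LipschitzWith 1 h) :
    |(∫ θ, h (c * θ) * pdfN k r θ) - ∫ θ, h θ * pdfN k r θ| ≤ (1 - c) * (k / r) := by
  have hmeas : Measurable h := hh.continuous.measurable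
  have int1 : Integrable (fun θ => h (c * θ) * pdfN k r θ) := by
    refine integrable_mul_pdfN k r hk hr _ (hmeas.comp (measurable_const_mul c)) |h 0|
      (fun θ hθ => ?_)
    have := lip_bound h hh (c * θ) (mul_pos hc0 hθ)
    nlinarith [this, mul_pos hc0 hθ]
  have int2 : Integrable (fun θ => h θ * pdfN k r θ) :=
    integrable_mul_pdfN k r hk hr h hmeas |h 0| (lip_bound h hh)
  rw [← integral_sub int1 int2]
  have hsub : (fun θ => h (c * θ) * pdfN k r θ - h θ * pdfN k r θ)
      = fun θ => (h (c * θ) - h θ) * pdfN k r θ := by funext θ; ring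
  rw [hsub]
  calc |∫ θ, (h (c * θ) - h θ) * pdfN k r θ|
      ≤ ∫ θ, |(h (c * θ) - h θ) * pdfN k r θ| := by
        simpa [Real.norm_eq_abs, abs_mul] using
          MeasureTheory.norm_integral_le_integral_norm
            (fun θ => (h (c * θ) - h θ) * pdfN k r θ) (μ := volume)
    _ ≤ ∫ θ, (1 - c) * (θ * pdfN k r θ) := by
        refine integral_mono ((int1.sub int2).congr ?_ |>.abs) ?_ (fun θ => ?_)
        · exact Filter.Eventually.of_forall (fun θ => by simp [hsub]; ring)
        · exact (integrable_id_mul_pdfN k r hk hr).const_mul _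
        · by_cases hθ : (0:ℝ) < θ
          · have hp := pdfN_nonneg k r hk hr θ
            have h1 : |h (c * θ) - h θ| ≤ (1 - c) * θ := by
              have := lip_abs_sub h hh (c * θ) θ
              have h2 : |c * θ - θ| = (1 - c) * θ := by
                rw [abs_of_nonpos (by nlinarith)]; ring
              linarith [this, h2.le, h2.ge]
            rw [abs_mul, abs_of_nonneg hp, ← mul_assoc]
            exact mul_le_mul_of_nonneg_right h1 hp
          · rw [pdfN_zero k r θ hθ]; simp
    _ = (1 - c) * (k / r) := by
        rw [MeasureTheory.integral_const_mul _ _, integral_id_mul_pdfN k r hk hr]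

end WassersteinAux

open WassersteinAux

/-- The Wasserstein distance between the Poisson posteriors
`Gamma(∑xᵢ+1, 1/n)` (uniform prior) and `Gamma(∑xᵢ+1, 1/(n+λ))` (Exp(λ) prior)
equals `λ(x̄ + 1/n)/(n+λ)`. -/
theorem wasserstein_poisson_posteriors
    (n : ℕ) (hn : 1 ≤ n) (x : Fin n → ℕ) (hs : 1 ≤ ∑ i, x i)
    (lam : ℝ) (hlam : 0 < lam)
    (gammaPdf : ℝ → ℝ → ℝ → ℝ)
    (hgamma : gammaPdf = fun k s θ => if 0 < θ then
        (Real.Gamma k)⁻¹ * (s ^ k)⁻¹ * θ ^ (k - 1) * Real.exp (-θ / s) else 0)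
    (P₁ P₂ : Measure ℝ)
    (hP₁ : P₁ = volume.withDensity
        (fun θ => ENNReal.ofReal (gammaPdf ((∑ i, x i : ℕ) + 1) (1 / n) θ)))
    (hP₂ : P₂ = volume.withDensity
        (fun θ => ENNReal.ofReal (gammaPdf ((∑ i, x i : ℕ) + 1) (1 / (n + lam)) θ)))
    (xbar : ℝ) (hxbar : xbar = (∑ i, (x i : ℝ)) / n)
    (W : ℝ)
    (hW : IsLUB {d : ℝ | ∃ h : ℝ → ℝ, LipschitzWith 1 h ∧
        d = |(∫ θ, h θ ∂P₂) - ∫ θ, h θ ∂P₁|} W) :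
    W = lam * (xbar + 1 / n) / (n + lam) := by
  set k : ℝ := (∑ i, x i : ℕ) + 1 with hkdef
  have hk : 0 < k := by positivity
  have hn' : (0:ℝ) < n := by exact_mod_cast hn
  have hr₂ : (0:ℝ) < n + lam := by linarith
  set c : ℝ := n / (n + lam) with hcdef
  have hc0 : 0 < c := div_pos hn' hr₂
  have hc1 : c ≤ 1 := by
    rw [hcdef, div_le_one hr₂]; linarith
  have hrc : (n:ℝ) + lam = (n:ℝ) / c := by
    rw [hcdef]; field_simp
  -- rewrite the measures
  rw [hgamma] at hP₁ hP₂
  simp only at hP₁ hP₂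
  simp only [gammaPdf_eq k (n:ℝ) hn'] at hP₁
  simp only [gammaPdf_eq k ((n:ℝ) + lam) hr₂] at hP₂
  -- integral formulas
  have hint1 : ∀ h : ℝ → ℝ, ∫ θ, h θ ∂P₁ = ∫ θ, h θ * pdfN k (n:ℝ) θ := by
    intro h; rw [hP₁, integral_withDensity_pdfN k (n:ℝ) hk hn']
  have hint2 : ∀ h : ℝ → ℝ, ∫ θ, h θ ∂P₂ = ∫ θ, h (c * θ) * pdfN k (n:ℝ) θ := by
    intro h
    rw [hP₂, integral_withDensity_pdfN k ((n:ℝ) + lam) hk hr₂, hrc,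
      integral_scale k (n:ℝ) c hn' hc0]
  -- value of the target
  have htarget : (1 - c) * (k / (n:ℝ)) = lam * (xbar + 1 / n) / (n + lam) := by
    rw [hxbar, hcdef, hkdef]
    have hsum : ((∑ i, x i : ℕ) : ℝ) = ∑ i, (x i : ℝ) := by push_cast; ring
    rw [hsum]
    field_simp
    ring
  -- upper bound
  have hub : ∀ d ∈ {d : ℝ | ∃ h : ℝ → ℝ, LipschitzWith 1 h ∧
      d = |(∫ θ, h θ ∂P₂) - ∫ θ, h θ ∂P₁|}, d ≤ (1 - c) * (k / (n:ℝ)) := by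
    rintro d ⟨h, hh, rfl⟩
    rw [hint1 h, hint2 h]
    exact key_bound k (n:ℝ) c hk hn' hc0 hc1 h hh
  -- membership via h = id
  have hmem : (1 - c) * (k / (n:ℝ)) ∈ {d : ℝ | ∃ h : ℝ → ℝ, LipschitzWith 1 h ∧
      d = |(∫ θ, h θ ∂P₂) - ∫ θ, h θ ∂P₁|} := by
    refine ⟨id, LipschitzWith.id, ?_⟩
    rw [hint1 id, hint2 id]
    simp only [id]
    have e1 : ∫ θ, θ * pdfN k (n:ℝ) θ = k / n := integral_id_mul_pdfN k (n:ℝ) hk hn'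
    have e2 : ∫ θ, c * θ * pdfN k (n:ℝ) θ = c * (k / n) := by
      have : (fun θ => c * θ * pdfN k (n:ℝ) θ) = fun θ => c * (θ * pdfN k (n:ℝ) θ) := by
        funext θ; ring
      rw [this, MeasureTheory.integral_const_mul _ _, e1]
    rw [e1, e2, abs_of_nonpos (by nlinarith [div_pos hk hn'])]
    ring
  have : IsLUB {d : ℝ | ∃ h : ℝ → ℝ, LipschitzWith 1 h ∧
      d = |(∫ θ, h θ ∂P₂) - ∫ θ, h θ ∂P₁|} ((1 - c) * (k / (n:ℝ))) :=
    ⟨hub, fun b hb => hb hmem⟩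
  rw [hW.unique this, htarget]
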